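/- Let H be a torsion-free subgroup of a discrete group G such that for every nonzero θ ∈ ℂ[H] and nonzero k ∈ ℓ²(H) one has θ * k ≠ 0 (i.e. H satisfies the ℓ²-zero-divisor property). Then every nonzero f ∈ ℓ²(G) has linearly independent left H-translations. -/

import Mathlib

variable {G : Type*} [Group G]

/-- Left convolution action of the group ring `ℂ[H]` of a subgroup `H ≤ G` on
complex-valued functions on `G`. -/
noncomputable def subConvG {H : Subgroup G} (θ : MonoidAlgebra ℂ H) (f : G → ℂ) :
    G → ℂ :=
  fun x => ∑ h ∈ θ.coeff.support, θ.coeff h * f ((h : G)⁻¹ * x)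

/-- Left convolution action of `ℂ[H]` on complex-valued functions on `H`. -/
noncomputable def subConvH {H : Subgroup G} (θ : MonoidAlgebra ℂ H) (k : H → ℂ) :
    H → ℂ :=
  fun x => ∑ h ∈ θ.coeff.support, θ.coeff h * k (h⁻¹ * x)

/-- Let `H` be a torsion-free subgroup of a discrete group `G`
satisfying the `ℓ²`-zero-divisor property (for every nonzero `θ ∈ ℂ[H]` and
nonzero `k ∈ ℓ²(H)`, `θ * k ≠ 0`).  Then every nonzero `f ∈ ℓ²(G)` has linearly
independent left `H`-translations `x ↦ f(h⁻¹ x)`, `h ∈ H`. -/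
theorem translations_linearIndependent_of_atiyah (H : Subgroup G)
    (htf : ∀ g : H, g ≠ 1 → ¬IsOfFinOrder g)
    (hAtiyah : ∀ θ : MonoidAlgebra ℂ H, θ ≠ 0 →
      ∀ k : lp (fun _ : H => ℂ) 2, k ≠ 0 → subConvH θ (⇑k) ≠ 0)
    (f : lp (fun _ : G => ℂ) 2) (hf : f ≠ 0) :
    LinearIndependent ℂ (fun h : H => fun x : G => f ((h : G)⁻¹ * x)) := by
  rw [linearIndependent_iff]
  intro l hl
  by_contra hl0
  -- pointwise equation
  have hG : ∀ x : G, ∑ h ∈ l.support, l h * f ((h : G)⁻¹ * x) = 0 := by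
    intro x
    have := congrFun (congrArg (fun (g : G → ℂ) => g) hl) x
    simpa [Finsupp.linearCombination_apply, Finsupp.sum_apply, Finsupp.sum,
      Finset.sum_apply] using this
  obtain ⟨x0, hx0⟩ : ∃ x0 : G, f x0 ≠ 0 := by
    by_contra h
    push_neg at h
    exact hf (lp.ext (funext fun x => by simpa using h x))
  set kfun : H → ℂ := fun h => f ((h : G) * x0) with hk
  have hinj : Function.Injective fun h : H => (h : G) * x0 := by
    intro a b hab
    have : (a : G) = b := by
      have := mul_right_cancel hab
      exact this
    exact Subtype.ext this
  have hmem : Memℓp kfun 2 := by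
    apply memℓp_gen
    have hs : Summable fun x : G => ‖f x‖ ^ ENNReal.toReal 2 :=
      (lp.memℓp f).summable (by norm_num)
    exact hs.comp_injective hinj
  set k : lp (fun _ : H => ℂ) 2 := ⟨kfun, hmem⟩ with hkdef
  have hk1 : k ≠ 0 := by
    intro h0
    apply hx0
    have : kfun 1 = 0 := by
      have := congrFun (congrArg (fun (g : lp (fun _ : H => ℂ) 2) => (g : H → ℂ)) h0) 1
      simpa using this
    simpa [kfun] using this
  have hθ : (MonoidAlgebra.ofCoeff l : MonoidAlgebra ℂ H) ≠ 0 := MonoidAlgebra.ofCoeff_eq_zero.not.mpr hl0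
  apply hAtiyah (MonoidAlgebra.ofCoeff l) hθ k hk1
  funext x
  have : subConvH (MonoidAlgebra.ofCoeff l : MonoidAlgebra ℂ H) (⇑k) x
      = ∑ h ∈ l.support, l h * f ((h : G)⁻¹ * ((x : G) * x0)) := by
    unfold subConvH
    refine Finset.sum_congr rfl fun h hh => ?_
    congr 1
    show kfun (h⁻¹ * x) = f ((h : G)⁻¹ * ((x : G) * x0))
    simp [kfun, mul_assoc]
  rw [this, hG]
  rfl
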